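/- In the Stalemate causal Kripke setting, each of the primitive events (p,w0) = 0, (q,w0) = 1, (p,w1) = 1, and (p,w2) = 1 is an actual cause of r = 1 at world w0 by all three HP definitions (original, updated, and modified). -/

import Mathlib

open Classical

noncomputable section

/-- A causal Kripke model `K = (S, W, Rel, F)`: the signature `S` consists of the disjoint
finite sets `Exo` of exogenous and `Endo` of endogenous variables together with a finite
nonempty range `range Γ w` of possible values for each variable `Γ` at each world `w`;
`World` is a finite set of possible worlds, `Rel` is the accessibility relation, and `eqs`
assigns to each endogenous variable `X` and world `w` a structural equation computing the
value of `(X,w)` from the values of all the other variables (it does not depend on the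
coordinate `(X,w)` itself, and its value lies in the range of `(X,w)`). -/
structure CKM where
  Exo : Type
  Endo : Type
  World : Type
  Val : Type
  exoFin : Fintype Exo
  endoFin : Fintype Endo
  worldFin : Fintype World
  Rel : World → World → Prop
  range : (Exo ⊕ Endo) → World → Finset Val
  range_nonempty : ∀ Γ w, (range Γ w).Nonempty
  eqs : Endo → World → (((Exo ⊕ Endo) × World) → Val) → Val
  eqs_mem : ∀ X w g, eqs X w g ∈ range (Sum.inr X) w
  eqs_indep : ∀ X w g g',
    (∀ p, p ≠ (Sum.inr X, w) → g p = g' p) → eqs X w g = eqs X w g'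

namespace CKM

/-- A context assigns to every exogenous variable at every world a value in its range. -/
def ValidContext (K : CKM) (t : K.Exo → K.World → K.Val) : Prop :=
  ∀ U w, t U w ∈ K.range (Sum.inl U) w

/-- `v` is a solution of the causal Kripke setting `(K, t)`: it agrees with the context `t`
on all exogenous variables and satisfies all structural equations. -/
def Solves (K : CKM) (t : K.Exo → K.World → K.Val)
    (v : ((K.Exo ⊕ K.Endo) × K.World) → K.Val) : Prop :=
  (∀ U w, v (Sum.inl U, w) = t U w) ∧ ∀ X w, v (Sum.inr X, w) = K.eqs X w v

/-- The variable `p` influences the (endogenous) variable `q` (i.e. `q` directly causally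
depends on `p`): some change in the value of `p`, keeping all other variables fixed
(within their ranges), changes the value of the structural equation of `q`. -/
def Influences (K : CKM) (p q : (K.Exo ⊕ K.Endo) × K.World) : Prop :=
  ∃ X w, q = (Sum.inr X, w) ∧
    ∃ g g', (∀ r, g r ∈ K.range r.1 r.2) ∧ (∀ r, g' r ∈ K.range r.1 r.2) ∧
      (∀ r, r ≠ p → g r = g' r) ∧ K.eqs X w g ≠ K.eqs X w g'

/-- A causal Kripke model is recursive if it contains no cyclic dependencies. -/
def Recursive (K : CKM) : Prop :=
  ∀ p, ¬ Relation.TransGen K.Influences p p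

/-- The causal Kripke model obtained from `K` by the intervention setting the variables in
`dom` to the values prescribed by `val`. -/
def doInt (K : CKM) (dom : Finset (K.Endo × K.World)) (val : K.Endo × K.World → K.Val) :
    CKM :=
  { K with
    eqs := fun X w g =>
      if (X, w) ∈ dom ∧ val (X, w) ∈ K.range (Sum.inr X) w then val (X, w)
      else K.eqs X w g
    eqs_mem := by
      intro X w g
      by_cases h : (X, w) ∈ dom ∧ val (X, w) ∈ K.range (Sum.inr X) w
      · simp only [if_pos h]; exact h.2
      · simp only [if_neg h]; exact K.eqs_mem X w g
    eqs_indep := by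
      intro X w g g' hgg'
      by_cases h : (X, w) ∈ dom ∧ val (X, w) ∈ K.range (Sum.inr X) w
      · simp only [if_pos h]
      · simp only [if_neg h]; exact K.eqs_indep X w g g' hgg' }

end CKM

/-- Events (modal-Boolean combinations of primitive events): primitive events `X = x` and
`(X,w) = x`, negation, conjunction and the modal operator `□`. -/
inductive Event (E W V : Type) : Type
  | eq : E → V → Event E W V
  | eqAt : E → W → V → Event E W V
  | neg : Event E W V → Event E W V
  | conj : Event E W V → Event E W V → Event E W V
  | box : Event E W V → Event E W V

namespace CKM

/-- Satisfaction of an event at a world of `K`, relative to a solution `v` of the setting. -/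
def SatE (K : CKM) (v : ((K.Exo ⊕ K.Endo) × K.World) → K.Val) :
    K.World → Event K.Endo K.World K.Val → Prop
  | w, .eq X x => v (Sum.inr X, w) = x
  | _, .eqAt X w' x => v (Sum.inr X, w') = x
  | w, .neg α => ¬ SatE K v w α
  | w, .conj α β => SatE K v w α ∧ SatE K v w β
  | w, .box α => ∀ w', K.Rel w w' → SatE K v w' α

/-- `(K,t,w) ⊩ [dom ← val] α` : the event `α` holds at `w` in the model obtained from the
intervention `dom ← val`, in the context `t`. -/
def SatI (K : CKM) (t : K.Exo → K.World → K.Val) (dom : Finset (K.Endo × K.World))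
    (val : K.Endo × K.World → K.Val) (w : K.World) (α : Event K.Endo K.World K.Val) :
    Prop :=
  ∀ v, (K.doInt dom val).Solves t v → (K.doInt dom val).SatE v w α

/-- AC1 : `α` actually holds at `w`, and each conjunct `(X_i, w_j) = y_ij` of `Y = y`
actually holds. -/
def AC1 (K : CKM) (t : K.Exo → K.World → K.Val) (w : K.World)
    (Y : Finset (K.Endo × K.World)) (y : K.Endo × K.World → K.Val)
    (α : Event K.Endo K.World K.Val) : Prop :=
  ∀ v, K.Solves t v → K.SatE v w α ∧ ∀ p ∈ Y, v (Sum.inr p.1, p.2) = y p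

/-- AC2a together with AC2bᵒ (they share the partition `Z`, `N` and the setting `n`):
there is a partition of the endogenous variables into `Z ⊇ Y` and `N` and settings `y'`
of `Y` and `n` of `N` such that `(K,t,w) ⊩ [Y ← y', N ← n] ¬α`, and, where `z*` are the
actual values of the variables of `Z`, for every subset `Z'` of `Z \ Y`,
`(K,t,w) ⊩ [Y ← y, N ← n, Z' ← z'*] α`. -/
def AC2o (K : CKM) (t : K.Exo → K.World → K.Val) (w : K.World)
    (Y : Finset (K.Endo × K.World)) (y : K.Endo × K.World → K.Val)
    (α : Event K.Endo K.World K.Val) : Prop :=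
  ∃ Z N : Finset (K.Endo × K.World), ∃ y' n : K.Endo × K.World → K.Val,
    Y ⊆ Z ∧ Disjoint Z N ∧ (∀ p : K.Endo × K.World, p ∈ Z ∨ p ∈ N) ∧
    (∀ p ∈ Y, y' p ∈ K.range (Sum.inr p.1) p.2) ∧
    (∀ p ∈ N, n p ∈ K.range (Sum.inr p.1) p.2) ∧
    K.SatI t (Y ∪ N) (fun p => if p ∈ Y then y' p else n p) w (.neg α) ∧
    ∀ v, K.Solves t v → ∀ Z' ⊆ Z \ Y,
      K.SatI t (Y ∪ N ∪ Z')
        (fun p => if p ∈ Y then y p else if p ∈ N then n p else v (Sum.inr p.1, p.2)) w α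

/-- AC2a together with AC2bᵘ (updated definition): as in `AC2o`, but moreover the
restoration of the actual values `z'*` must keep `α` true for every subset `N'` of `N`. -/
def AC2u (K : CKM) (t : K.Exo → K.World → K.Val) (w : K.World)
    (Y : Finset (K.Endo × K.World)) (y : K.Endo × K.World → K.Val)
    (α : Event K.Endo K.World K.Val) : Prop :=
  ∃ Z N : Finset (K.Endo × K.World), ∃ y' n : K.Endo × K.World → K.Val,
    Y ⊆ Z ∧ Disjoint Z N ∧ (∀ p : K.Endo × K.World, p ∈ Z ∨ p ∈ N) ∧
    (∀ p ∈ Y, y' p ∈ K.range (Sum.inr p.1) p.2) ∧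
    (∀ p ∈ N, n p ∈ K.range (Sum.inr p.1) p.2) ∧
    K.SatI t (Y ∪ N) (fun p => if p ∈ Y then y' p else n p) w (.neg α) ∧
    ∀ v, K.Solves t v → ∀ Z' ⊆ Z \ Y, ∀ N' ⊆ N,
      K.SatI t (Y ∪ N' ∪ Z')
        (fun p => if p ∈ Y then y p else if p ∈ N' then n p else v (Sum.inr p.1, p.2)) w α

/-- AC2aᵐ (modified definition): there are a set `N` of endogenous variables and a setting
`y'` of the variables in `Y` such that, where `n*` are the actual values of the variables
in `N`, `(K,t,w) ⊩ [Y ← y', N ← n*] ¬α`. -/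
def AC2m (K : CKM) (t : K.Exo → K.World → K.Val) (w : K.World)
    (Y : Finset (K.Endo × K.World)) (y : K.Endo × K.World → K.Val)
    (α : Event K.Endo K.World K.Val) : Prop :=
  ∃ N : Finset (K.Endo × K.World), ∃ y' : K.Endo × K.World → K.Val,
    (∀ p ∈ Y, y' p ∈ K.range (Sum.inr p.1) p.2) ∧
    ∀ v, K.Solves t v →
      K.SatI t (Y ∪ N)
        (fun p => if p ∈ Y then y' p else v (Sum.inr p.1, p.2)) w (.neg α)

/-- `Y = y` is an actual cause of `α` in `(K,t)` at `w` by the ORIGINAL HP definition. -/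
def IsCauseO (K : CKM) (t : K.Exo → K.World → K.Val) (w : K.World)
    (Y : Finset (K.Endo × K.World)) (y : K.Endo × K.World → K.Val)
    (α : Event K.Endo K.World K.Val) : Prop :=
  K.AC1 t w Y y α ∧ K.AC2o t w Y y α ∧
    ∀ Y' ⊂ Y, ∀ y'' : K.Endo × K.World → K.Val,
      ¬ (K.AC1 t w Y' y'' α ∧ K.AC2o t w Y' y'' α)

/-- `Y = y` is an actual cause of `α` in `(K,t)` at `w` by the UPDATED HP definition. -/
def IsCauseU (K : CKM) (t : K.Exo → K.World → K.Val) (w : K.World)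
    (Y : Finset (K.Endo × K.World)) (y : K.Endo × K.World → K.Val)
    (α : Event K.Endo K.World K.Val) : Prop :=
  K.AC1 t w Y y α ∧ K.AC2u t w Y y α ∧
    ∀ Y' ⊂ Y, ∀ y'' : K.Endo × K.World → K.Val,
      ¬ (K.AC1 t w Y' y'' α ∧ K.AC2u t w Y' y'' α)

/-- `Y = y` is an actual cause of `α` in `(K,t)` at `w` by the MODIFIED HP definition. -/
def IsCauseM (K : CKM) (t : K.Exo → K.World → K.Val) (w : K.World)
    (Y : Finset (K.Endo × K.World)) (y : K.Endo × K.World → K.Val)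
    (α : Event K.Endo K.World K.Val) : Prop :=
  K.AC1 t w Y y α ∧ K.AC2m t w Y y α ∧
    ∀ Y' ⊂ Y, ∀ y'' : K.Endo × K.World → K.Val,
      ¬ (K.AC1 t w Y' y'' α ∧ K.AC2m t w Y' y'' α)

/-- `(X,w) = x` is part of a cause of `α` in `(K,t)` at `w'` by the original HP
definition: it is a conjunct of some actual cause `Y = y` of `α` at `w'`. -/
def PartOfCauseO (K : CKM) (t : K.Exo → K.World → K.Val) (w' : K.World)
    (X : K.Endo) (w : K.World) (x : K.Val) (α : Event K.Endo K.World K.Val) : Prop :=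
  ∃ Y y, K.IsCauseO t w' Y y α ∧ (X, w) ∈ Y ∧ y (X, w) = x

/-- `(X,w) = x` is part of a cause of `α` in `(K,t)` at `w'` by the updated HP
definition. -/
def PartOfCauseU (K : CKM) (t : K.Exo → K.World → K.Val) (w' : K.World)
    (X : K.Endo) (w : K.World) (x : K.Val) (α : Event K.Endo K.World K.Val) : Prop :=
  ∃ Y y, K.IsCauseU t w' Y y α ∧ (X, w) ∈ Y ∧ y (X, w) = x

/-- `(X,w) = x` is part of a cause of `α` in `(K,t)` at `w'` by the modified HP
definition. -/
def PartOfCauseM (K : CKM) (t : K.Exo → K.World → K.Val) (w' : K.World)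
    (X : K.Endo) (w : K.World) (x : K.Val) (α : Event K.Endo K.World K.Val) : Prop :=
  ∃ Y y, K.IsCauseM t w' Y y α ∧ (X, w) ∈ Y ∧ y (X, w) = x

end CKM

/-- `Y = y` is an actual cause of `α` in `(K,t)` at `w` by all three HP definitions
(original, updated, and modified). -/
def CKM.IsCauseAll (K : CKM) (t : K.Exo → K.World → K.Val) (w : K.World)
    (Y : Finset (K.Endo × K.World)) (y : K.Endo × K.World → K.Val)
    (α : Event K.Endo K.World K.Val) : Prop :=
  K.IsCauseO t w Y y α ∧ K.IsCauseU t w Y y α ∧ K.IsCauseM t w Y y α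

/-- Exogenous variables of the Stalemate example: `U = (U1, U2)`. -/
inductive StExo : Type
  | u1 | u2
deriving DecidableEq

instance : Fintype StExo :=
  ⟨{StExo.u1, StExo.u2}, fun x => by cases x <;> simp⟩

/-- Endogenous variables of the Stalemate example: `p` = "the king is in check",
`q` = "the king and the knight are the only pieces that can move", `r` = "the player is
forced to move the knight". -/
inductive StEndo : Type
  | p | q | r
deriving DecidableEq

instance : Fintype StEndo :=
  ⟨{StEndo.p, StEndo.q, StEndo.r}, fun x => by cases x <;> simp⟩

/-- The Stalemate causal Kripke model: worlds `w0, w1, w2` (as `Fin 3`), accessibility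
`Rel = {(w0,w1), (w0,w2)}`, binary variables with `(p,w) = (U1,w)`, `(q,w) = (U2,w)` and
`r = ¬p ∧ q ∧ □p` at every world. -/
@[reducible] def stalemate : CKM where
  Exo := StExo
  Endo := StEndo
  World := Fin 3
  Val := Bool
  exoFin := inferInstance
  endoFin := inferInstance
  worldFin := inferInstance
  Rel := fun a b => a = 0 ∧ b ≠ 0
  range := fun _ _ => Finset.univ
  range_nonempty := fun _ _ => ⟨true, Finset.mem_univ _⟩
  eqs := fun X w g =>
    match X with
    | .p => g (Sum.inl StExo.u1, w)
    | .q => g (Sum.inl StExo.u2, w)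
    | .r =>
        if g (Sum.inr StEndo.p, w) = false ∧ g (Sum.inr StEndo.q, w) = true ∧
            ∀ w' : Fin 3, ((w : Fin 3) = 0 ∧ w' ≠ 0) → g (Sum.inr StEndo.p, w') = true
        then true else false
  eqs_mem := fun _ _ _ => Finset.mem_univ _
  eqs_indep := by
    intro X w g g' h
    cases X with
    | p => exact h (Sum.inl StExo.u1, w) (by simp)
    | q => exact h (Sum.inl StExo.u2, w) (by simp)
    | r =>
      refine if_congr ?_ rfl rfl
      have hp : ∀ w' : Fin 3, g (Sum.inr StEndo.p, w') = g' (Sum.inr StEndo.p, w') :=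
        fun w' => h _ (by simp)
      have hq : g (Sum.inr StEndo.q, w) = g' (Sum.inr StEndo.q, w) := h _ (by simp)
      simp only [hp, hq]

/-- The context of the Stalemate example: `U = (U1,U2)` is set to `(0,1)` at `w0`,
`(1,1)` at `w1` and `(1,0)` at `w2`. -/
def stalemateCtx : StExo → Fin 3 → Bool := fun U w =>
  match U with
  | StExo.u1 => decide (w ≠ 0)
  | StExo.u2 => decide (w = 0 ∨ w = 1)


namespace StAux

open StEndo StExo

abbrev Dom := Finset (StEndo × Fin 3)
abbrev Valn := StEndo × Fin 3 → Bool

def pv (dom : Dom) (val : Valn) (w : Fin 3) : Bool :=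
  if (StEndo.p, w) ∈ dom then val (StEndo.p, w) else stalemateCtx StExo.u1 w

def qv (dom : Dom) (val : Valn) (w : Fin 3) : Bool :=
  if (StEndo.q, w) ∈ dom then val (StEndo.q, w) else stalemateCtx StExo.u2 w

def rv (dom : Dom) (val : Valn) (w : Fin 3) : Bool :=
  if (StEndo.r, w) ∈ dom then val (StEndo.r, w)
  else if pv dom val w = false ∧ qv dom val w = true ∧
      ∀ w' : Fin 3, (w = 0 ∧ w' ≠ 0) → pv dom val w' = true then true else false

def sol (dom : Dom) (val : Valn) : ((StExo ⊕ StEndo) × Fin 3) → Bool := fun x =>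
  match x with
  | (Sum.inl U, w) => stalemateCtx U w
  | (Sum.inr StEndo.p, w) => pv dom val w
  | (Sum.inr StEndo.q, w) => qv dom val w
  | (Sum.inr StEndo.r, w) => rv dom val w

def actual : ((StExo ⊕ StEndo) × Fin 3) → Bool := sol ∅ (fun _ => false)

lemma sol_solves (dom : Dom) (val : Valn) :
    (stalemate.doInt dom val).Solves stalemateCtx (sol dom val) := by
  constructor
  · intro U w; rfl
  · intro X w
    cases X with
    | p => simp [CKM.doInt, stalemate, sol, pv]
    | q => simp [CKM.doInt, stalemate, sol, qv]
    | r => simp [CKM.doInt, stalemate, sol, rv]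

lemma solves_sol {dom : Dom} {val : Valn} {v}
    (h : (stalemate.doInt dom val).Solves stalemateCtx v) : v = sol dom val := by
  obtain ⟨h1, h2⟩ := h
  have hp : ∀ w, v (Sum.inr StEndo.p, w) = pv dom val w := by
    intro w; refine (h2 StEndo.p w).trans ?_; simp [CKM.doInt, stalemate, pv]; congr 1; exact h1 _ _
  have hq : ∀ w, v (Sum.inr StEndo.q, w) = qv dom val w := by
    intro w; refine (h2 StEndo.q w).trans ?_; simp [CKM.doInt, stalemate, qv]; congr 1; exact h1 _ _
  have hp' : ∀ w : Fin 3, v (((Sum.inr StEndo.p : StExo ⊕ StEndo), w) : (StExo ⊕ StEndo) × Fin 3) = pv dom val w := hp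
  have hr : ∀ w, v (Sum.inr StEndo.r, w) = rv dom val w := by
    intro w; refine (h2 StEndo.r w).trans ?_; simp [CKM.doInt, stalemate, rv, hp']; erw [hp w, hq w]; simp
  funext x
  obtain ⟨s, w⟩ := x
  cases s with
  | inl U => exact h1 U w
  | inr X => cases X with
    | p => exact hp w
    | q => exact hq w
    | r => exact hr w

lemma solves_plain {v} (h : stalemate.Solves stalemateCtx v) : v = actual := by
  apply solves_sol (dom := ∅) (val := fun _ => false)
  refine ⟨h.1, ?_⟩
  intro X w
  refine (h.2 X w).trans ?_
  simp [CKM.doInt]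

lemma actual_solves : stalemate.Solves stalemateCtx actual := by
  have h := sol_solves ∅ (fun _ => false)
  refine ⟨h.1, ?_⟩
  intro X w
  have h2 := h.2 X w
  simpa [CKM.doInt, actual] using h2

lemma sol_congr {dom : Dom} {val val' : Valn} (h : ∀ c ∈ dom, val c = val' c) :
    sol dom val = sol dom val' := by
  have hp : ∀ w, pv dom val w = pv dom val' w := by
    intro w; unfold pv; split
    · next hmem => rw [h _ hmem]
    · rfl
  have hq : ∀ w, qv dom val w = qv dom val' w := by
    intro w; unfold qv; split
    · next hmem => rw [h _ hmem]
    · rfl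
  have hr : ∀ w, rv dom val w = rv dom val' w := by
    intro w; unfold rv; split
    · next hmem => rw [h _ hmem]
    · simp only [hp, hq]
  funext x
  obtain ⟨s, w⟩ := x
  cases s with
  | inl U => rfl
  | inr X => cases X with
    | p => exact hp w
    | q => exact hq w
    | r => exact hr w

lemma sol_actual {dom : Dom} {val : Valn}
    (h : ∀ c ∈ dom, val c = actual (Sum.inr c.1, c.2)) : sol dom val = actual := by
  have hp : ∀ w, pv dom val w = pv ∅ (fun _ => false) w := by
    intro w; unfold pv; split
    · next hmem => rw [h _ hmem]; simp [actual, sol, pv]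
    · simp [Finset.notMem_empty]
  have hq : ∀ w, qv dom val w = qv ∅ (fun _ => false) w := by
    intro w; unfold qv; split
    · next hmem => rw [h _ hmem]; simp [actual, sol, qv]
    · simp [Finset.notMem_empty]
  have hr : ∀ w, rv dom val w = rv ∅ (fun _ => false) w := by
    intro w
    conv_rhs => rw [rv]
    rw [rv]
    split
    · next hmem => rw [h _ hmem]; simp [actual, sol, rv, Finset.notMem_empty]
    · simp only [hp, hq, Finset.notMem_empty, if_false]
  funext x
  obtain ⟨s, w⟩ := x
  cases s with
  | inl U => rfl
  | inr X => cases X with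
    | p => exact hp w
    | q => exact hq w
    | r => exact hr w

lemma sol_ext {dom dom' : Dom} {val val' : Valn} (hd : ∀ x, x ∈ dom ↔ x ∈ dom')
    (hv : ∀ c ∈ dom, val c = val' c) : sol dom val = sol dom' val' := by
  have hp : ∀ w, pv dom val w = pv dom' val' w := by
    intro w; unfold pv
    by_cases h : (StEndo.p, w) ∈ dom
    · rw [if_pos h, if_pos ((hd _).mp h), hv _ h]
    · rw [if_neg h, if_neg (fun h' => h ((hd _).mpr h'))]
  have hq : ∀ w, qv dom val w = qv dom' val' w := by
    intro w; unfold qv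
    by_cases h : (StEndo.q, w) ∈ dom
    · rw [if_pos h, if_pos ((hd _).mp h), hv _ h]
    · rw [if_neg h, if_neg (fun h' => h ((hd _).mpr h'))]
  have hr : ∀ w, rv dom val w = rv dom' val' w := by
    intro w; unfold rv
    by_cases h : (StEndo.r, w) ∈ dom
    · rw [if_pos h, if_pos ((hd _).mp h), hv _ h]
    · rw [if_neg h, if_neg (fun h' => h ((hd _).mpr h'))]
      simp only [hp, hq]
  funext x
  obtain ⟨s, w⟩ := x
  cases s with
  | inl U => rfl
  | inr X => cases X with
    | p => exact hp w
    | q => exact hq w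
    | r => exact hr w

lemma actual_r : actual (Sum.inr StEndo.r, (0 : Fin 3)) = true := by decide

lemma not_AC2o_empty (y'' : Valn) :
    ¬ stalemate.AC2o stalemateCtx 0 ∅ y'' (Event.eq StEndo.r true) := by
  rintro ⟨Z, N, y', n, -, -, -, -, -, hneg, hpos⟩
  have h1 := hneg _ (sol_solves _ _)
  have h2 := hpos actual actual_solves ∅ (Finset.empty_subset _) _ (sol_solves _ _)
  simp only [CKM.SatE] at h1 h2
  apply h1
  refine Eq.trans (congrFun (sol_ext ?_ ?_) _) h2
  · intro x; simp
  · intro x hx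
    have hxN : x ∈ N := by simpa using hx
    simp [Finset.notMem_empty, hxN]

lemma not_AC2u_empty (y'' : Valn) :
    ¬ stalemate.AC2u stalemateCtx 0 ∅ y'' (Event.eq StEndo.r true) := by
  rintro ⟨Z, N, y', n, -, -, -, -, -, hneg, hpos⟩
  have h1 := hneg _ (sol_solves _ _)
  have h2 := hpos actual actual_solves ∅ (Finset.empty_subset _) N (Finset.Subset.refl _) _
    (sol_solves _ _)
  simp only [CKM.SatE] at h1 h2
  apply h1
  refine Eq.trans (congrFun (sol_ext ?_ ?_) _) h2
  · intro x; simp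
  · intro x hx
    have hxN : x ∈ N := by simpa using hx
    simp [Finset.notMem_empty, hxN]

lemma not_AC2m_empty (y'' : Valn) :
    ¬ stalemate.AC2m stalemateCtx 0 ∅ y'' (Event.eq StEndo.r true) := by
  rintro ⟨N, y', -, hm⟩
  have h := hm actual actual_solves _ (sol_solves _ _)
  simp only [CKM.SatE] at h
  apply h
  rw [sol_actual (fun c hc => by simp [Finset.notMem_empty])]
  exact actual_r

lemma isCauseAll_single (c : StEndo × Fin 3) (b : Bool)
    (hac : actual (Sum.inr c.1, c.2) = b)
    (hneg : sol {c} (fun _ => !b) (Sum.inr StEndo.r, (0 : Fin 3)) = false) :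
    stalemate.IsCauseAll stalemateCtx 0 {c} (fun _ => b) (Event.eq StEndo.r true) := by
  have hAC1 : stalemate.AC1 stalemateCtx 0 {c} (fun _ => b) (Event.eq StEndo.r true) := by
    intro v hv
    rw [solves_plain hv]
    constructor
    · exact actual_r
    · intro x hx
      rw [Finset.mem_singleton] at hx
      subst hx
      exact hac
  have hnegSat : ∀ (dom : Dom) (val : Valn), dom = {c} → (∀ x ∈ dom, val x = !b) →
      stalemate.SatI stalemateCtx dom val 0 (Event.neg (Event.eq StEndo.r true)) := by
    intro dom val hdom hval v hv
    rw [solves_sol hv]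
    show ¬ _ = true
    subst hdom
    rw [sol_congr (val' := fun _ => !b) hval]
    simp; exact hneg
  have hposI : ∀ (dom : Dom) (val : Valn),
      (∀ x ∈ dom, val x = actual (Sum.inr x.1, x.2)) →
      stalemate.SatI stalemateCtx dom val 0 (Event.eq StEndo.r true) := by
    intro dom val hval v hv
    rw [solves_sol hv]
    show sol dom val (Sum.inr StEndo.r, 0) = true
    rw [sol_actual hval]
    exact actual_r
  refine ⟨⟨hAC1, ?_, ?_⟩, ⟨hAC1, ?_, ?_⟩, ⟨hAC1, ?_, ?_⟩⟩
  · -- AC2o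
    refine ⟨Finset.univ, ∅, fun _ => !b, fun _ => false, Finset.subset_univ _,
      Finset.disjoint_empty_right _, fun x => Or.inl (Finset.mem_univ x),
      fun _ _ => Finset.mem_univ _, fun _ _ => Finset.mem_univ _, ?_, ?_⟩
    · apply hnegSat _ _ (Finset.union_empty _)
      intro x hx
      have hx' : x = c := by simpa using hx
      simp [hx']
    · intro v hv Z' hZ'
      have hv0 := solves_plain hv
      subst hv0
      apply hposI
      intro x hx
      by_cases hxc : x ∈ ({c} : Dom)
      · rw [Finset.mem_singleton] at hxc; simp [hxc, hac]
      · simp [hxc, Finset.notMem_empty]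
  · -- AC3 original
    intro Y' hY' y''
    rw [Finset.ssubset_singleton_iff.mp hY']
    exact fun h => not_AC2o_empty y'' h.2
  · -- AC2u
    refine ⟨Finset.univ, ∅, fun _ => !b, fun _ => false, Finset.subset_univ _,
      Finset.disjoint_empty_right _, fun x => Or.inl (Finset.mem_univ x),
      fun _ _ => Finset.mem_univ _, fun _ _ => Finset.mem_univ _, ?_, ?_⟩
    · apply hnegSat _ _ (Finset.union_empty _)
      intro x hx
      have hx' : x = c := by simpa using hx
      simp [hx']
    · intro v hv Z' hZ' N' hN'
      have hv0 := solves_plain hv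
      subst hv0
      have hN0 : N' = ∅ := Finset.subset_empty.mp hN'
      subst hN0
      apply hposI
      intro x hx
      by_cases hxc : x ∈ ({c} : Dom)
      · rw [Finset.mem_singleton] at hxc; simp [hxc, hac]
      · simp [hxc, Finset.notMem_empty]
  · -- AC3 updated
    intro Y' hY' y''
    rw [Finset.ssubset_singleton_iff.mp hY']
    exact fun h => not_AC2u_empty y'' h.2
  · -- AC2m
    refine ⟨∅, fun _ => !b, fun _ _ => Finset.mem_univ _, ?_⟩
    intro v hv
    have hv0 := solves_plain hv
    subst hv0
    apply hnegSat _ _ (Finset.union_empty _)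
    intro x hx
    have hx' : x = c := by simpa using hx
    simp [hx']
  · -- AC3 modified
    intro Y' hY' y''
    rw [Finset.ssubset_singleton_iff.mp hY']
    exact fun h => not_AC2m_empty y'' h.2

end StAux

/-- In the Stalemate causal Kripke setting, each of the primitive
events `(p,w0) = 0`, `(q,w0) = 1`, `(p,w1) = 1`, and `(p,w2) = 1` is an actual cause of
`r = 1` at world `w0` by all three HP definitions (original, updated, and modified). -/
theorem stalemate_causes :
    stalemate.IsCauseAll stalemateCtx 0 {(StEndo.p, (0 : Fin 3))} (fun _ => false)
      (Event.eq StEndo.r true) ∧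
    stalemate.IsCauseAll stalemateCtx 0 {(StEndo.q, (0 : Fin 3))} (fun _ => true)
      (Event.eq StEndo.r true) ∧
    stalemate.IsCauseAll stalemateCtx 0 {(StEndo.p, (1 : Fin 3))} (fun _ => true)
      (Event.eq StEndo.r true) ∧
    stalemate.IsCauseAll stalemateCtx 0 {(StEndo.p, (2 : Fin 3))} (fun _ => true)
      (Event.eq StEndo.r true) := by
  refine ⟨StAux.isCauseAll_single (StEndo.p, 0) false (by decide) (by decide),
    StAux.isCauseAll_single (StEndo.q, 0) true (by decide) (by decide),
    StAux.isCauseAll_single (StEndo.p, 1) true (by decide) (by decide),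
    StAux.isCauseAll_single (StEndo.p, 2) true (by decide) (by decide)⟩
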